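/- Let H be a real Hilbert space, α > 0, L ∈ H, and x: [t₀,∞) → H continuously differentiable with x(t) + (t/α)·x'(t) → L as t → ∞. Then x(t) → L as t → ∞. -/

import Mathlib

open Filter intervalIntegral Real

/-- If x(t) + (t/α)x'(t) → L as t → ∞, then x(t) → L. -/
theorem tendsto_of_averaged_tendsto {H : Type*} [NormedAddCommGroup H]
    [InnerProductSpace ℝ H] [CompleteSpace H] (t₀ α : ℝ) (ht₀ : 0 < t₀) (hα : 0 < α)
    (L : H) (x x' : ℝ → H) (hderiv : ∀ t, HasDerivAt x (x' t) t)
    (hcont : Continuous x')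
    (hlim : Filter.Tendsto (fun t => x t + (t / α) • x' t) Filter.atTop (nhds L)) :
    Filter.Tendsto x Filter.atTop (nhds L) := by
  set f : ℝ → H := fun t => x t + (t / α) • x' t with hf
  have hxc : Continuous x := by
    have : Differentiable ℝ x := fun t => (hderiv t).differentiableAt
    exact this.continuous
  have hfc : Continuous f := hxc.add ((continuous_id.div_const α).smul hcont)
  -- derivative of s ↦ s^α • x s on s > 0
  have hF : ∀ s : ℝ, 0 < s →
      HasDerivAt (fun s : ℝ => (s ^ α) • x s) ((α * s ^ (α - 1)) • f s) s := by
    intro s hs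
    have h1 : HasDerivAt (fun s : ℝ => s ^ α) (α * s ^ (α - 1)) s := by
      simpa [mul_comm] using (Real.hasDerivAt_rpow_const (Or.inl hs.ne'))
    have h2 := h1.smul (hderiv s)
    convert h2 using 1
    · rfl
    have hsa : s ^ α = (α * s ^ (α - 1)) * (s / α) := by
      have : s ^ α = s ^ (α - 1) * s := by
        rw [← Real.rpow_add_one hs.ne' (α - 1)]; ring_nf
      rw [this]; field_simp
    simp only [hf, smul_add, smul_smul]
    rw [← hsa]
    abel
  rw [Metric.tendsto_atTop]
  intro ε hε
  obtain ⟨T₁, hT₁⟩ := (Metric.tendsto_atTop.mp hlim) (ε / 2) (by positivity)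
  set T : ℝ := max T₁ 1 with hTdef
  have hTpos : (0 : ℝ) < T := lt_of_lt_of_le one_pos (le_max_right _ _)
  have hTb : ∀ s, T ≤ s → ‖f s - L‖ ≤ ε / 2 := by
    intro s hs
    have := hT₁ s (le_trans (le_max_left _ _) hs)
    rw [dist_eq_norm] at this
    exact this.le
  -- continuity on [T, t] of the weight
  have hwc : ∀ t : ℝ, T ≤ t → ContinuousOn (fun s : ℝ => α * s ^ (α - 1)) (Set.uIcc T t) := by
    intro t ht
    apply ContinuousOn.mul continuousOn_const
    apply ContinuousOn.rpow_const continuousOn_id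
    intro s hs
    rw [Set.uIcc_of_le ht] at hs
    exact Or.inl (lt_of_lt_of_le hTpos hs.1).ne'
  have hrpow : ∀ t : ℝ, T ≤ t → (∫ s in T..t, α * s ^ (α - 1)) = t ^ α - T ^ α := by
    intro t ht
    apply intervalIntegral.integral_eq_sub_of_hasDerivAt
    · intro s hs
      rw [Set.uIcc_of_le ht] at hs
      simpa [mul_comm] using
        Real.hasDerivAt_rpow_const (p := α) (Or.inl (lt_of_lt_of_le hTpos hs.1).ne')
    · exact (hwc t ht).intervalIntegrable
  have key : ∀ t : ℝ, T ≤ t → (t ^ α) • (x t - L) =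
      (T ^ α) • (x T - L) + ∫ s in T..t, (α * s ^ (α - 1)) • (f s - L) := by
    intro t ht
    have hmem : ∀ s ∈ Set.uIcc T t, 0 < s := by
      intro s hs
      rw [Set.uIcc_of_le ht] at hs
      exact lt_of_lt_of_le hTpos hs.1
    have hint1 : IntervalIntegrable (fun s => (α * s ^ (α - 1)) • f s) MeasureTheory.volume T t :=
      ((hwc t ht).smul hfc.continuousOn).intervalIntegrable
    have hint2 : IntervalIntegrable (fun s => (α * s ^ (α - 1)) • L) MeasureTheory.volume T t :=
      ((hwc t ht).smul continuousOn_const).intervalIntegrable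
    have hftc : (∫ s in T..t, (α * s ^ (α - 1)) • f s) = (t ^ α) • x t - (T ^ α) • x T := by
      apply intervalIntegral.integral_eq_sub_of_hasDerivAt
      · intro s hs; exact hF s (hmem s hs)
      · exact hint1
    have hL : (∫ s in T..t, (α * s ^ (α - 1)) • L) = (t ^ α - T ^ α) • L := by
      rw [intervalIntegral.integral_smul_const, hrpow t ht]
    have hsplit := intervalIntegral.integral_sub hint1 hint2
    simp only [← smul_sub] at hsplit
    rw [hsplit, hftc, hL]
    simp only [smul_sub, sub_smul]
    abel
  -- choose N
  have htend : Tendsto (fun t : ℝ => (T ^ α) * ‖x T - L‖ / t ^ α) atTop (nhds 0) :=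
    Tendsto.div_atTop tendsto_const_nhds (tendsto_rpow_atTop hα)
  obtain ⟨N₁, hN₁⟩ := (Metric.tendsto_atTop.mp htend) (ε / 2) (by positivity)
  refine ⟨max N₁ T, fun t htN => ?_⟩
  have htT : T ≤ t := le_trans (le_max_right _ _) htN
  have htpos : 0 < t := lt_of_lt_of_le hTpos htT
  have hta : (0:ℝ) < t ^ α := Real.rpow_pos_of_pos htpos α
  have hTa : (0:ℝ) < T ^ α := Real.rpow_pos_of_pos hTpos α
  have hTta : T ^ α ≤ t ^ α := Real.rpow_le_rpow hTpos.le htT hα.le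
  -- norm bound of integral
  have hibound : ‖∫ s in T..t, (α * s ^ (α - 1)) • (f s - L)‖ ≤ (t ^ α - T ^ α) * (ε / 2) := by
    have hbd := intervalIntegral.norm_integral_le_of_norm_le
      (g := fun s => (α * s ^ (α - 1)) * (ε / 2))
      (f := fun s => (α * s ^ (α - 1)) • (f s - L)) (a := T) (b := t)
      (μ := MeasureTheory.volume) htT ?_ ?_
    · have hg : (∫ s in T..t, (α * s ^ (α - 1)) * (ε / 2)) = (t ^ α - T ^ α) * (ε / 2) := by
        rw [intervalIntegral.integral_mul_const, hrpow t htT]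
      rw [hg] at hbd
      exact hbd
    · refine Filter.Eventually.of_forall ?_
      intro s hs
      have hspos : 0 < s := lt_trans hTpos hs.1
      have hw : (0:ℝ) ≤ α * s ^ (α - 1) :=
        le_of_lt (mul_pos hα (Real.rpow_pos_of_pos hspos _))
      rw [norm_smul, Real.norm_eq_abs, abs_of_nonneg hw]
      exact mul_le_mul_of_nonneg_left (hTb s hs.1.le) hw
    · exact (((hwc t htT).mul continuousOn_const)).intervalIntegrable
  -- conclude
  have hkey := key t htT
  have hnorm : (t ^ α) * ‖x t - L‖ ≤ (T ^ α) * ‖x T - L‖ + (t ^ α - T ^ α) * (ε / 2) := by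
    calc (t ^ α) * ‖x t - L‖ = ‖(t ^ α) • (x t - L)‖ := by
          rw [norm_smul, Real.norm_eq_abs, abs_of_pos hta]
      _ ≤ ‖(T ^ α) • (x T - L)‖ + ‖∫ s in T..t, (α * s ^ (α - 1)) • (f s - L)‖ := by
          rw [hkey]; exact norm_add_le _ _
      _ ≤ (T ^ α) * ‖x T - L‖ + (t ^ α - T ^ α) * (ε / 2) := by
          rw [norm_smul, Real.norm_eq_abs, abs_of_pos hTa]
          exact add_le_add_right hibound _
  have hN := hN₁ t (le_trans (le_max_left _ _) htN)
  rw [Real.dist_eq, sub_zero, abs_of_nonneg (div_nonneg (mul_nonneg hTa.le (norm_nonneg _)) hta.le)] at hN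
  rw [dist_eq_norm]
  have h1 : ‖x t - L‖ ≤ (T ^ α) * ‖x T - L‖ / t ^ α + ε / 2 := by
    rw [div_add' _ _ _ hta.ne', le_div_iff₀ hta]
    nlinarith [norm_nonneg (x t - L)]
  calc ‖x t - L‖ ≤ (T ^ α) * ‖x T - L‖ / t ^ α + ε / 2 := h1
    _ < ε / 2 + ε / 2 := by linarith
    _ = ε := by ring
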